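/- Every bounded concave upper-semicontinuous function on a polytope Δ ⊂ ℝⁿ is continuous on Δ (including at all boundary points). Equivalently, a polytope is conical at each of its points. -/

import Mathlib

open Finset in
/-- Conic Carathéodory: any nonnegative combination of vectors in a finite set `W`
is a nonnegative combination over a linearly independent subset. -/
lemma conic_cara {n : ℕ} : ∀ (W : Finset (Fin n → ℝ)) (c : (Fin n → ℝ) → ℝ),
    (∀ w ∈ W, 0 ≤ c w) →
    ∃ T ⊆ W, LinearIndependent ℝ (fun i : {x // x ∈ T} => (i : Fin n → ℝ)) ∧
      ∃ d : (Fin n → ℝ) → ℝ, (∀ w ∈ T, 0 ≤ d w) ∧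
        ∑ w ∈ T, d w • w = ∑ w ∈ W, c w • w := by
  classical
  intro W
  induction W using Finset.strongInductionOn with
  | _ W ih =>
  intro c hc
  by_cases hli : LinearIndependent ℝ (fun i : {x // x ∈ W} => (i : Fin n → ℝ))
  · exact ⟨W, subset_rfl, hli, c, hc, rfl⟩
  by_cases h0 : ∃ w ∈ W, c w = 0
  · obtain ⟨w, hw, hcw⟩ := h0
    obtain ⟨T, hT, hTli, d, hd, hsum⟩ := ih (W.erase w) (Finset.erase_ssubset hw) c
      (fun x hx => hc x (Finset.mem_of_mem_erase hx))
    refine ⟨T, hT.trans (Finset.erase_subset _ _), hTli, d, hd, ?_⟩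
    rw [hsum, Finset.sum_erase]
    rw [hcw, zero_smul]
  · push_neg at h0
    obtain ⟨g, hgsum, hgpos⟩ : ∃ g : {x // x ∈ W} → ℝ,
        ∑ i, g i • (i : Fin n → ℝ) = 0 ∧ ∃ i, 0 < g i := by
      obtain ⟨g, hgsum, i0, hgi0⟩ := Fintype.not_linearIndependent_iff.mp hli
      rcases lt_or_gt_of_ne hgi0 with h | h
      · refine ⟨-g, ?_, i0, by simpa using h⟩
        simp only [Pi.neg_apply, neg_smul, Finset.sum_neg_distrib, hgsum, neg_zero]
      · exact ⟨g, hgsum, i0, h⟩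
    set gE : (Fin n → ℝ) → ℝ := fun w => if hw : w ∈ W then g ⟨w, hw⟩ else 0 with hgE
    have hgEcoe : ∀ i : {x // x ∈ W}, gE i = g i := by
      intro i; simp [hgE, i.2]
    have hzero : ∑ w ∈ W, gE w • w = 0 := by
      calc ∑ w ∈ W, gE w • w = ∑ i ∈ W.attach, gE i • (i : Fin n → ℝ) :=
            (Finset.sum_attach _ _).symm
        _ = ∑ i ∈ W.attach, g i • (i : Fin n → ℝ) := by
            exact Finset.sum_congr rfl fun i _ => by rw [hgEcoe]
        _ = 0 := by rw [← Finset.univ_eq_attach]; exact hgsum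
    set A : Finset (Fin n → ℝ) := W.filter (fun w => 0 < gE w) with hA
    have hAne : A.Nonempty := by
      obtain ⟨i, hi⟩ := hgpos
      exact ⟨i, Finset.mem_filter.mpr ⟨i.2, by rw [hgEcoe]; exact hi⟩⟩
    set t : ℝ := A.inf' hAne (fun w => c w / gE w) with ht
    obtain ⟨w₀, hw₀A, hw₀⟩ := Finset.exists_mem_eq_inf' hAne (fun w => c w / gE w)
    have hw₀W : w₀ ∈ W := (Finset.mem_filter.mp hw₀A).1
    have hgw₀ : 0 < gE w₀ := (Finset.mem_filter.mp hw₀A).2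
    have ht0 : 0 ≤ t := by
      rw [← ht] at hw₀
      rw [hw₀]
      exact div_nonneg (hc w₀ hw₀W) hgw₀.le
    have hnonneg : ∀ w ∈ W, 0 ≤ c w - t * gE w := by
      intro w hw
      rcases le_or_gt (gE w) 0 with h | h
      · have : t * gE w ≤ 0 := mul_nonpos_of_nonneg_of_nonpos ht0 h
        have := hc w hw; linarith
      · have hwA : w ∈ A := Finset.mem_filter.mpr ⟨hw, h⟩
        have := Finset.inf'_le (fun w => c w / gE w) hwA
        rw [← ht] at this
        have := (le_div_iff₀ h).mp this
        linarith
    have hw₀zero : c w₀ - t * gE w₀ = 0 := by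
      rw [← ht] at hw₀
      rw [hw₀, div_mul_cancel₀ _ hgw₀.ne']
      ring
    obtain ⟨T, hT, hTli, d, hd, hsum⟩ := ih (W.erase w₀) (Finset.erase_ssubset hw₀W)
      (fun w => c w - t * gE w) (fun w hw => hnonneg w (Finset.mem_of_mem_erase hw))
    refine ⟨T, hT.trans (Finset.erase_subset _ _), hTli, d, hd, ?_⟩
    rw [hsum]
    rw [Finset.sum_erase _ (by rw [hw₀zero, zero_smul])]
    rw [show ∀ s : Finset (Fin n → ℝ), ∑ w ∈ s, (c w - t * gE w) • w
        = ∑ w ∈ s, (c w • w - t • gE w • w) from fun s => Finset.sum_congr rfl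
          (fun w _ => by rw [sub_smul, smul_smul])]
    rw [Finset.sum_sub_distrib, ← Finset.smul_sum, hzero, smul_zero, sub_zero]

open Finset in
lemma bound_of_linIndep {n : ℕ} (T : Finset (Fin n → ℝ))
    (hT : LinearIndependent ℝ (fun i : {x // x ∈ T} => (i : Fin n → ℝ))) :
    ∃ K : ℝ, ∀ d : (Fin n → ℝ) → ℝ, (∀ w ∈ T, 0 ≤ d w) →
      ∑ w ∈ T, d w ≤ K * ‖∑ w ∈ T, d w • w‖ := by
  classical
  set L : ({x // x ∈ T} → ℝ) →ₗ[ℝ] (Fin n → ℝ) :=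
    LinearMap.lsum ℝ (fun _ => ℝ) ℕ (fun i => LinearMap.id.smulRight (i : Fin n → ℝ)) with hL
  have hker : LinearMap.ker L = ⊥ := (Fintype.linearIndependent_iff'.mp hT)
  obtain ⟨K, hK0, hKa⟩ := L.exists_antilipschitzWith hker
  refine ⟨T.card * K, ?_⟩
  intro d hd
  set dv : {x // x ∈ T} → ℝ := fun i => d i with hdv
  have hLdv : L dv = ∑ w ∈ T, d w • w := by
    rw [hL]
    simp only [LinearMap.lsum_apply, LinearMap.coe_comp, LinearMap.coe_sum,
      Function.comp_apply, LinearMap.coe_proj, Finset.sum_apply, Function.eval,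
      LinearMap.smulRight_apply, LinearMap.id_coe, id_eq]
    rw [Finset.univ_eq_attach]
    exact Finset.sum_attach T (fun w => d w • w)
  have hnorm : ‖dv‖ ≤ K * ‖L dv‖ := by
    have := hKa.le_mul_dist dv 0
    simpa [dist_zero_right, map_zero] using this
  calc ∑ w ∈ T, d w = ∑ i ∈ T.attach, dv i := (Finset.sum_attach _ _).symm
    _ ≤ ∑ i ∈ T.attach, ‖dv‖ := Finset.sum_le_sum (fun i _ => (le_abs_self _).trans
        (by simpa using norm_le_pi_norm dv i))
    _ = T.card * ‖dv‖ := by rw [Finset.sum_const, Finset.card_attach, nsmul_eq_mul]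
    _ ≤ T.card * (K * ‖L dv‖) := by
        apply mul_le_mul_of_nonneg_left hnorm (by positivity)
    _ = T.card * K * ‖∑ w ∈ T, d w • w‖ := by rw [hLdv, mul_assoc]

open Finset in
lemma conic_key {n : ℕ} (S : Finset (Fin n → ℝ)) (p : Fin n → ℝ)
    (hp : p ∈ convexHull ℝ (S : Set (Fin n → ℝ))) :
    ∃ K : ℝ, 0 < K ∧ ∀ v : Fin n → ℝ,
      (∃ t₀ : ℝ, 0 ≤ t₀ ∧ ∃ y₀ ∈ convexHull ℝ (S : Set (Fin n → ℝ)), v = t₀ • (y₀ - p)) →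
      ∃ t : ℝ, 0 ≤ t ∧ t ≤ K * ‖v‖ ∧
        ∃ y ∈ convexHull ℝ (S : Set (Fin n → ℝ)), v = t • (y - p) := by
  classical
  set W : Finset (Fin n → ℝ) := S.image (fun s => s - p) with hW
  have hchoice : ∀ T : Finset (Fin n → ℝ), ∃ K : ℝ,
      LinearIndependent ℝ (fun i : {x // x ∈ T} => (i : Fin n → ℝ)) →
      ∀ d : (Fin n → ℝ) → ℝ, (∀ w ∈ T, 0 ≤ d w) →
        ∑ w ∈ T, d w ≤ K * ‖∑ w ∈ T, d w • w‖ := by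
    intro T
    by_cases h : LinearIndependent ℝ (fun i : {x // x ∈ T} => (i : Fin n → ℝ))
    · obtain ⟨K, hK⟩ := bound_of_linIndep T h
      exact ⟨K, fun _ => hK⟩
    · exact ⟨0, fun h' => absurd h' h⟩
  choose KT hKT using hchoice
  set K : ℝ := 1 + ∑ T ∈ W.powerset, max (KT T) 0 with hKdef
  have hKpos : 0 < K := by
    have : (0:ℝ) ≤ ∑ T ∈ W.powerset, max (KT T) 0 :=
      Finset.sum_nonneg fun T _ => le_max_right _ _
    linarith
  have hKge : ∀ T ∈ W.powerset, KT T ≤ K := by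
    intro T hT
    calc KT T ≤ max (KT T) 0 := le_max_left _ _
      _ ≤ ∑ T ∈ W.powerset, max (KT T) 0 :=
          Finset.single_le_sum (fun T _ => le_max_right (KT T) 0) hT
      _ ≤ K := by rw [hKdef]; linarith
  refine ⟨K, hKpos, ?_⟩
  rintro v ⟨t₀, ht₀, y₀, hy₀, rfl⟩
  rw [Finset.convexHull_eq] at hy₀
  obtain ⟨lam, hlam0, hlam1, hlamy⟩ := hy₀
  have hy₀eq : y₀ = ∑ s ∈ S, lam s • s := by
    rw [← hlamy, Finset.centerMass_eq_of_sum_1 _ _ hlam1]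
    rfl
  set cW : (Fin n → ℝ) → ℝ := fun w => t₀ * lam (w + p) with hcW
  have hinj : Set.InjOn (fun s => s - p) S := fun a _ b _ h => by
    simpa using congrArg (fun z => z + p) h
  have h1 : ∑ s ∈ S, lam s • (s - p) = y₀ - p := by
    have h2 : ∑ s ∈ S, lam s • (s - p)
        = (∑ s ∈ S, lam s • s) - (∑ s ∈ S, lam s) • p := by
      rw [Finset.sum_smul, ← Finset.sum_sub_distrib]
      exact Finset.sum_congr rfl fun s _ => smul_sub _ _ _
    rw [h2, hlam1, one_smul, ← hy₀eq]
  have hvW : ∑ w ∈ W, cW w • w = t₀ • (y₀ - p) := by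
    rw [hW, Finset.sum_image hinj]
    calc ∑ s ∈ S, cW (s - p) • (s - p) = ∑ s ∈ S, t₀ • (lam s • (s - p)) := by
          refine Finset.sum_congr rfl fun s _ => ?_
          simp [hcW, sub_add_cancel, mul_smul]
      _ = t₀ • (y₀ - p) := by rw [← Finset.smul_sum, h1]
  have hcWpos : ∀ w ∈ W, 0 ≤ cW w := by
    intro w hw
    obtain ⟨s, hs, rfl⟩ := Finset.mem_image.mp hw
    exact mul_nonneg ht₀ (by simpa [sub_add_cancel] using hlam0 s hs)
  obtain ⟨T, hTsub, hTli, d, hd, hsum⟩ := conic_cara W cW hcWpos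
  set t : ℝ := ∑ w ∈ T, d w with htdef
  have htn : 0 ≤ t := Finset.sum_nonneg fun w hw => hd w hw
  have hbound : t ≤ K * ‖t₀ • (y₀ - p)‖ := by
    have hb := hKT T hTli d hd
    rw [hsum, hvW] at hb
    calc t ≤ KT T * ‖t₀ • (y₀ - p)‖ := hb
      _ ≤ K * ‖t₀ • (y₀ - p)‖ :=
          mul_le_mul_of_nonneg_right (hKge T (Finset.mem_powerset.mpr hTsub)) (norm_nonneg _)
  by_cases ht0' : t = 0
  · have hdz : ∀ w ∈ T, d w = 0 :=
      fun w hw => (Finset.sum_eq_zero_iff_of_nonneg hd).mp ht0' w hw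
    have hv0 : t₀ • (y₀ - p) = 0 := by
      rw [← hvW, ← hsum]
      exact Finset.sum_eq_zero fun w hw => by rw [hdz w hw, zero_smul]
    exact ⟨0, le_rfl, by rw [hv0]; simp, p, hp, by rw [hv0, sub_self, smul_zero]⟩
  · have htpos : 0 < t := lt_of_le_of_ne htn (Ne.symm ht0')
    refine ⟨t, htn, hbound, T.centerMass d (fun w => w + p), ?_, ?_⟩
    · apply Finset.centerMass_mem_convexHull T hd htpos
      intro w hw
      obtain ⟨s, hs, rfl⟩ := Finset.mem_image.mp (hTsub hw)
      simpa [sub_add_cancel] using hs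
    · have hz : ∑ w ∈ T, d w • (w + p) = (t₀ • (y₀ - p)) + t • p := by
        calc ∑ w ∈ T, d w • (w + p) = ∑ w ∈ T, (d w • w + d w • p) :=
              Finset.sum_congr rfl fun w _ => smul_add _ _ _
          _ = (∑ w ∈ T, d w • w) + (∑ w ∈ T, d w) • p := by
              rw [Finset.sum_add_distrib, Finset.sum_smul]
          _ = (t₀ • (y₀ - p)) + t • p := by rw [hsum, hvW, htdef]
      have hcm : T.centerMass d (fun w => w + p)
          = t⁻¹ • ((t₀ • (y₀ - p)) + t • p) := by
        rw [Finset.centerMass, hz, htdef]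
      have hfin : t • (t⁻¹ • ((t₀ • (y₀ - p)) + t • p) - p) = t₀ • (y₀ - p) := by
        rw [smul_sub, smul_inv_smul₀ ht0']
        abel
      rw [hcm]
      exact hfin.symm

/-- every bounded concave upper-semicontinuous function on a polytope
`Δ = conv(S) ⊂ ℝⁿ` (with nonempty interior) is continuous on all of `Δ`, including at
boundary points; equivalently, a polytope is conical at each of its points. -/
theorem stmt_16 (n : ℕ) (S : Finset (Fin n → ℝ)) (Δ : Set (Fin n → ℝ))
    (hΔ : Δ = convexHull ℝ (S : Set (Fin n → ℝ))) (hint : (interior Δ).Nonempty) :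
    (∀ f : (Fin n → ℝ) → ℝ, BddAbove (f '' Δ) → BddBelow (f '' Δ) →
      ConcaveOn ℝ Δ f → UpperSemicontinuousOn f Δ → ContinuousOn f Δ) ∧
    (∀ p ∈ Δ, ∃ C : Set (Fin n → ℝ), IsClosed C ∧ Convex ℝ C ∧
      (∀ x ∈ C, ∀ r : ℝ, 0 ≤ r → p + r • (x - p) ∈ C) ∧
      ∃ U ∈ nhds p, Δ ∩ U = C ∩ U) := by
  classical
  subst hΔ
  constructor
  · -- continuity of bounded concave usc functions
    intro f _hA hB hconc husc p hp
    obtain ⟨K, hK, hkey⟩ := conic_key S p hp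
    obtain ⟨M₀, hM₀⟩ := hB
    have hfp : M₀ ≤ f p := hM₀ ⟨p, hp, rfl⟩
    refine tendsto_order.2 ⟨?_, ?_⟩
    · intro a ha
      set B : ℝ := f p - M₀ with hBdef
      have hB0 : 0 ≤ B := by simp [hBdef]; linarith
      have hfa : 0 < f p - a := by linarith
      set δ : ℝ := min (1/K) ((f p - a)/(K * (B+1))) with hδdef
      have hδ : 0 < δ := lt_min (by positivity) (by positivity)
      filter_upwards [mem_nhdsWithin_of_mem_nhds (Metric.ball_mem_nhds p hδ),
        self_mem_nhdsWithin] with x hxb hxΔ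
      obtain ⟨t, ht0, htK, y, hy, hxy⟩ := hkey (x - p)
        ⟨1, zero_le_one, x, hxΔ, by rw [one_smul]⟩
      have hxp : ‖x - p‖ < δ := by rwa [Metric.mem_ball, dist_eq_norm] at hxb
      have ht1 : t ≤ 1 := by
        have h1 : K * ‖x - p‖ < K * (1/K) :=
          mul_lt_mul_of_pos_left (hxp.trans_le (min_le_left _ _)) hK
        rw [mul_one_div_cancel hK.ne'] at h1
        linarith
      have htsmall : t * (B + 1) < f p - a := by
        have h2 : K * ‖x - p‖ < K * ((f p - a)/(K * (B+1))) :=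
          mul_lt_mul_of_pos_left (hxp.trans_le (min_le_right _ _)) hK
        have h3 : K * ((f p - a)/(K * (B+1))) = (f p - a)/(B+1) := by
          field_simp
        have h4 : t < (f p - a)/(B+1) := by rw [h3] at h2; linarith
        have h5 : t * (B+1) < ((f p - a)/(B+1)) * (B+1) :=
          mul_lt_mul_of_pos_right h4 (by linarith)
        rwa [div_mul_cancel₀ _ (by linarith : B + (1:ℝ) ≠ 0)] at h5
      have hx' : x = (1 - t) • p + t • y := by
        have h6 : x = t • (y - p) + p := sub_eq_iff_eq_add.mp hxy
        rw [h6]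
        module
      have hcon := hconc.2 hp hy (by linarith : (0:ℝ) ≤ 1 - t) ht0 (by ring)
      rw [← hx'] at hcon
      have hfy : M₀ ≤ f y := hM₀ ⟨y, hy, rfl⟩
      have h7 : t * (f p - f y) ≤ t * B := by
        apply mul_le_mul_of_nonneg_left _ ht0
        rw [hBdef]; linarith
      have h8 : t * B ≤ t * (B + 1) := by nlinarith
      simp only [smul_eq_mul] at hcon
      nlinarith
    · intro b hb
      exact husc p hp b hb
  · -- conical at every point
    intro p hp
    obtain ⟨K, hK, hkey⟩ := conic_key S p hp
    set Sc : Set (Fin n → ℝ) := convexHull ℝ (S : Set (Fin n → ℝ)) with hSc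
    set C : Set (Fin n → ℝ) :=
      {x | ∃ t : ℝ, 0 ≤ t ∧ ∃ y ∈ Sc, x = p + t • (y - p)} with hC
    have hmemD : ∀ x ∈ C, ∃ t₀ : ℝ, 0 ≤ t₀ ∧ ∃ y₀ ∈ Sc, x - p = t₀ • (y₀ - p) := by
      rintro x ⟨t, ht, y, hy, rfl⟩
      exact ⟨t, ht, y, hy, by abel⟩
    have hΔC : Sc ⊆ C := fun x hx => ⟨1, zero_le_one, x, hx, by rw [one_smul]; abel⟩
    refine ⟨C, ?_, ?_, ?_, ?_⟩
    · -- closed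
      apply isClosed_of_closure_subset
      intro x hx
      set R : ℝ := ‖x - p‖ + 1 with hR
      have hRpos : 0 < R := by positivity
      set F : Set (Fin n → ℝ) :=
        (fun q : ℝ × (Fin n → ℝ) => p + q.1 • (q.2 - p)) '' (Set.Icc 0 (K*R) ×ˢ Sc) with hF
      have hFcomp : IsCompact F := by
        apply IsCompact.image
        · exact (isCompact_Icc).prod (S.finite_toSet.isCompact_convexHull ℝ)
        · fun_prop
      have hFC : F ⊆ C := by
        rintro _ ⟨⟨t, y⟩, ⟨⟨ht0, _⟩, hy⟩, rfl⟩
        exact ⟨t, ht0, y, hy, rfl⟩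
      have hsub : C ∩ Metric.ball p R ⊆ F := by
        rintro z ⟨hzC, hzb⟩
        obtain ⟨t, ht0, htK, y, hy, hzy⟩ := hkey (z - p) (hmemD z hzC)
        have hzR : ‖z - p‖ < R := by rwa [Metric.mem_ball, dist_eq_norm] at hzb
        refine ⟨(t, y), ⟨⟨ht0, ?_⟩, hy⟩, ?_⟩
        · calc t ≤ K * ‖z - p‖ := htK
            _ ≤ K * R := mul_le_mul_of_nonneg_left hzR.le hK.le
        · simp only
          rw [← hzy]
          abel
      have hxball : Metric.ball p R ∈ nhds x := by
        apply Metric.isOpen_ball.mem_nhds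
        rw [Metric.mem_ball, dist_eq_norm, hR]
        linarith
      have hx' : x ∈ closure (C ∩ Metric.ball p R) := by
        rw [mem_closure_iff_nhds] at hx ⊢
        intro t ht
        obtain ⟨z, hz⟩ := hx (t ∩ Metric.ball p R) (Filter.inter_mem ht hxball)
        exact ⟨z, ⟨hz.1.1, hz.2, hz.1.2⟩⟩
      have : x ∈ closure F := closure_mono hsub hx'
      rw [hFcomp.isClosed.closure_eq] at this
      exact hFC this
    · -- convex
      rintro x₁ ⟨t₁, ht₁, y₁, hy₁, rfl⟩ x₂ ⟨t₂, ht₂, y₂, hy₂, rfl⟩ a b ha hb hab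
      rcases eq_or_lt_of_le (show (0:ℝ) ≤ a*t₁ + b*t₂ by positivity) with h | h
      · have h1 : a*t₁ = 0 := by nlinarith
        have h2 : b*t₂ = 0 := by nlinarith
        refine ⟨0, le_rfl, y₁, hy₁, ?_⟩
        calc a • (p + t₁ • (y₁ - p)) + b • (p + t₂ • (y₂ - p))
            = (a+b) • p + (a*t₁) • (y₁ - p) + (b*t₂) • (y₂ - p) := by module
          _ = p + (0:ℝ) • (y₁ - p) := by
              rw [hab, h1, h2]
              simp
      · have hb' : b = 1 - a := by linarith
        subst hb'
        refine ⟨a*t₁ + (1-a)*t₂, h.le, ?_⟩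
        refine ⟨(a*t₁ + (1-a)*t₂)⁻¹ • ((a*t₁) • y₁ + ((1-a)*t₂) • y₂), ?_, ?_⟩
        · have heq : (a*t₁ + (1-a)*t₂)⁻¹ • ((a*t₁) • y₁ + ((1-a)*t₂) • y₂)
              = ((a*t₁)/(a*t₁+(1-a)*t₂)) • y₁ + (((1-a)*t₂)/(a*t₁+(1-a)*t₂)) • y₂ := by
            rw [smul_add, smul_smul, smul_smul, div_eq_inv_mul, div_eq_inv_mul]
          rw [heq]
          apply (convex_convexHull ℝ (S : Set (Fin n → ℝ))) hy₁ hy₂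
          · positivity
          · positivity
          · field_simp
        · calc a • (p + t₁ • (y₁ - p)) + (1-a) • (p + t₂ • (y₂ - p))
              = p + ((a*t₁) • y₁ + ((1-a)*t₂) • y₂) - (a*t₁+(1-a)*t₂) • p := by module
            _ = p + (a*t₁+(1-a)*t₂) •
                ((a*t₁+(1-a)*t₂)⁻¹ • ((a*t₁) • y₁ + ((1-a)*t₂) • y₂) - p) := by
                rw [smul_sub, smul_inv_smul₀ h.ne']
                abel
    · -- cone condition
      rintro x ⟨t, ht, y, hy, rfl⟩ r hr
      refine ⟨r*t, mul_nonneg hr ht, y, hy, ?_⟩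
      rw [add_sub_cancel_left, smul_smul]
    · -- local coincidence
      refine ⟨Metric.ball p K⁻¹, Metric.ball_mem_nhds p (by positivity), ?_⟩
      apply Set.Subset.antisymm
      · exact fun x hx => ⟨hΔC hx.1, hx.2⟩
      · rintro x ⟨hxC, hxb⟩
        refine ⟨?_, hxb⟩
        obtain ⟨t, ht0, htK, y, hy, hxy⟩ := hkey (x - p) (hmemD x hxC)
        have hxp : ‖x - p‖ < K⁻¹ := by rwa [Metric.mem_ball, dist_eq_norm] at hxb
        have ht1 : t ≤ 1 := by
          have h1 : K * ‖x - p‖ < K * K⁻¹ := mul_lt_mul_of_pos_left hxp hK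
          rw [mul_inv_cancel₀ hK.ne'] at h1
          linarith
        have hx' : x = (1 - t) • p + t • y := by
          have h6 : x = t • (y - p) + p := sub_eq_iff_eq_add.mp hxy
          rw [h6]
          module
        rw [hx']
        exact (convex_convexHull ℝ (S : Set (Fin n → ℝ))) hp hy
          (by linarith) ht0 (by ring)
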